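/- Let ε > 0 and b > ε. Let W : ℝ → ℝ be continuous and differentiable on (ε, b) and continuous on [ε, b), with W(ε) < -1/3. If H(y) := W'(y)·y + 3·W(y) + 1 < 0 for all y ∈ (ε, b), then W(y) < -1/3 for all y ∈ (ε, b). -/

import Mathlib

open Set

theorem stmt_2 (ε b : ℝ) (hε : 0 < ε) (hb : ε < b) (W W' : ℝ → ℝ)
    (hWc : ContinuousOn W (Ico ε b))
    (hWd : ∀ y ∈ Ioo ε b, HasDerivAt W (W' y) y)
    (hinit : W ε < -1/3)
    (hH : ∀ y ∈ Ioo ε b, W' y * y + 3 * W y + 1 < 0) :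
    ∀ y ∈ Ioo ε b, W y < -1/3 := by
  set g : ℝ → ℝ := fun y => y ^ 3 * (3 * W y + 1) with hg
  have hgc : ContinuousOn g (Ico ε b) := by
    apply ContinuousOn.mul (by fun_prop)
    exact (continuousOn_const.mul hWc).add continuousOn_const
  have hganti : StrictAntiOn g (Ico ε b) := by
    apply strictAntiOn_of_hasDerivWithinAt_neg (convex_Ico ε b) hgc
      (f' := fun y => 3 * y ^ 2 * (W' y * y + 3 * W y + 1))
    · intro y hy
      rw [interior_Ico] at hy
      have := ((hWd y hy).const_mul 3).add_const 1
      have h2 := (hasDerivAt_pow 3 y).mul this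
      have h3 : HasDerivAt g (3 * y ^ 2 * (W' y * y + 3 * W y + 1)) y := by
        refine h2.congr_deriv ?_
        push_cast
        ring
      exact h3.hasDerivWithinAt
    · intro y hy
      rw [interior_Ico] at hy
      have hy0 : 0 < y := lt_trans hε hy.1
      have := hH y hy
      have h2 : (0:ℝ) < 3 * y ^ 2 := by positivity
      nlinarith
  intro y hy
  have hlt : g y < g ε := hganti (left_mem_Ico.mpr hb) ⟨hy.1.le, hy.2⟩ hy.1
  have hy0 : 0 < y := lt_trans hε hy.1
  have hgε : g ε < 0 := by
    simp only [hg]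
    nlinarith [pow_pos hε 3]
  have : y ^ 3 * (3 * W y + 1) < 0 := lt_trans hlt hgε
  nlinarith [pow_pos hy0 3]
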